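/- Define the incidence relation on the components of a polyhedron P ⊆ ℝⁿ: writing P_v for the component (equivalence class) of a point v, a component Q₂ is incident to a component Q₁ (Q₁ ≺ Q₂) iff Q₁ ≠ Q₂ and for every v₁ with P_{v₁} = Q₁ and every ε > 0 there exists v₂ with P_{v₂} = Q₂ and |v₁ − v₂| < ε. Then ≺ is a strict partial order (irreflexive and transitive) on the set of components. -/

import Mathlib

/-- Polyhedra: finite Boolean combinations of linear constraints with
integer coefficients. -/
inductive IsPolyhedron {n : ℕ} : Set (Fin n → ℝ) → Prop where
  | lt (a : Fin n → ℤ) (b : ℤ) : IsPolyhedron {x | (∑ i, (a i : ℝ) * x i) < b}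
  | le (a : Fin n → ℤ) (b : ℤ) : IsPolyhedron {x | (∑ i, (a i : ℝ) * x i) ≤ b}
  | eq (a : Fin n → ℤ) (b : ℤ) : IsPolyhedron {x | (∑ i, (a i : ℝ) * x i) = b}
  | ge (a : Fin n → ℤ) (b : ℤ) : IsPolyhedron {x | (b : ℝ) ≤ ∑ i, (a i : ℝ) * x i}
  | gt (a : Fin n → ℤ) (b : ℤ) : IsPolyhedron {x | (b : ℝ) < ∑ i, (a i : ℝ) * x i}
  | compl {P} : IsPolyhedron P → IsPolyhedron Pᶜ
  | inter {P Q} : IsPolyhedron P → IsPolyhedron Q → IsPolyhedron (P ∩ Q)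
  | union {P Q} : IsPolyhedron P → IsPolyhedron Q → IsPolyhedron (P ∪ Q)

/-- The closed `ε`-cube centered at `v`. -/
def cube {n : ℕ} (ε : ℝ) (v : Fin n → ℝ) : Set (Fin n → ℝ) :=
  {x | ∀ i, x i ∈ Set.Icc (v i - ε / 2) (v i + ε / 2)}

/-- `v` and `w` have the same local structure with respect to `P`. -/
def SameComp {n : ℕ} (P : Set (Fin n → ℝ)) (v w : Fin n → ℝ) : Prop :=
  ∃ ε : ℝ, 0 < ε ∧
    (fun x => x - v) '' (P ∩ cube ε v) = (fun x => x - w) '' (P ∩ cube ε w)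

/-- The component of `P` associated to `v`. -/
def component {n : ℕ} (P : Set (Fin n → ℝ)) (v : Fin n → ℝ) : Set (Fin n → ℝ) :=
  {w | SameComp P v w}

/-- The set of components of `P`. -/
def components {n : ℕ} (P : Set (Fin n → ℝ)) : Set (Set (Fin n → ℝ)) :=
  {Q | ∃ v, Q = component P v}

/-- `Q₂` is incident to `Q₁` (written `Q₁ ≺ Q₂`). -/
def Prec {n : ℕ} (Q₁ Q₂ : Set (Fin n → ℝ)) : Prop :=
  Q₁ ≠ Q₂ ∧ ∀ v₁ ∈ Q₁, ∀ ε : ℝ, 0 < ε → ∃ v₂ ∈ Q₂, dist v₁ v₂ < ε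

/- ---------------- auxiliary development ---------------- -/

namespace IncidenceAux

variable {n : ℕ}

/-- affine functional attached to a pair of integer data -/
def aff (p : (Fin n → ℤ) × ℤ) (x : Fin n → ℝ) : ℝ :=
  (∑ i, (p.1 i : ℝ) * x i) - p.2

def lin (p : (Fin n → ℤ) × ℤ) (h : Fin n → ℝ) : ℝ :=
  ∑ i, (p.1 i : ℝ) * h i

def S (p : (Fin n → ℤ) × ℤ) : ℝ := ∑ i, |(p.1 i : ℝ)|

lemma S_nonneg (p : (Fin n → ℤ) × ℤ) : 0 ≤ S p :=
  Finset.sum_nonneg fun i _ => abs_nonneg _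

lemma aff_add (p : (Fin n → ℤ) × ℤ) (h v : Fin n → ℝ) :
    aff p (h + v) = lin p h + aff p v := by
  simp only [aff, lin, Pi.add_apply, mul_add, Finset.sum_add_distrib]
  ring

lemma lin_bound (p : (Fin n → ℤ) × ℤ) (h : Fin n → ℝ) (C : ℝ)
    (hC : ∀ i, |h i| ≤ C) : |lin p h| ≤ S p * C := by
  calc |lin p h| ≤ ∑ i, |(p.1 i : ℝ) * h i| := Finset.abs_sum_le_sum_abs _ _
    _ ≤ ∑ i, |(p.1 i : ℝ)| * C := by
        apply Finset.sum_le_sum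
        intro i _
        rw [abs_mul]
        exact mul_le_mul_of_nonneg_left (hC i) (abs_nonneg _)
    _ = S p * C := by rw [S, Finset.sum_mul]

def SignEq (s t : ℝ) : Prop := (s < 0 ↔ t < 0) ∧ (s = 0 ↔ t = 0)

lemma SignEq.refl (s : ℝ) : SignEq s s := ⟨Iff.rfl, Iff.rfl⟩

lemma SignEq.pos {s t : ℝ} (h : SignEq s t) : 0 < s ↔ 0 < t := by
  rcases h with ⟨h1, h2⟩
  constructor <;> intro hp
  · rcases lt_trichotomy t 0 with h | h | h
    · exact absurd (h1.mpr h) (by linarith)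
    · exact absurd (h2.mpr h) (by linarith)
    · exact h
  · rcases lt_trichotomy s 0 with h | h | h
    · exact absurd (h1.mp h) (by linarith)
    · exact absurd (h2.mp h) (by linarith)
    · exact h

lemma SignEq.symm {s t : ℝ} (h : SignEq s t) : SignEq t s :=
  ⟨h.1.symm, h.2.symm⟩

lemma mem_cube_zero {ε : ℝ} {h : Fin n → ℝ} :
    h ∈ cube ε (0 : Fin n → ℝ) ↔ ∀ i, |h i| ≤ ε / 2 := by
  simp only [cube, Set.mem_setOf_eq, Set.mem_Icc, Pi.zero_apply, zero_sub, zero_add, abs_le]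

/-- local (translated) piece of `P` at `v` -/
def localSet (P : Set (Fin n → ℝ)) (ε : ℝ) (v : Fin n → ℝ) : Set (Fin n → ℝ) :=
  {h | h ∈ cube ε (0 : Fin n → ℝ) ∧ h + v ∈ P}

lemma image_eq_localSet (P : Set (Fin n → ℝ)) (ε : ℝ) (v : Fin n → ℝ) :
    (fun x => x - v) '' (P ∩ cube ε v) = localSet P ε v := by
  ext h
  simp only [Set.mem_image, Set.mem_inter_iff, localSet, Set.mem_setOf_eq]
  constructor
  · rintro ⟨x, ⟨hxP, hxc⟩, rfl⟩
    refine ⟨?_, by simpa using hxP⟩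
    intro i
    have := hxc i
    simp only [Set.mem_Icc] at this ⊢
    simp only [Pi.sub_apply, Pi.zero_apply]
    constructor <;> linarith [this.1, this.2]
  · rintro ⟨hc, hP⟩
    refine ⟨h + v, ⟨hP, ?_⟩, by simp⟩
    intro i
    have := hc i
    simp only [Set.mem_Icc, Pi.zero_apply] at this ⊢
    simp only [Pi.add_apply]
    constructor <;> linarith [this.1, this.2]

lemma sameComp_iff {P : Set (Fin n → ℝ)} {v w : Fin n → ℝ} :
    SameComp P v w ↔ ∃ ε : ℝ, 0 < ε ∧ localSet P ε v = localSet P ε w := by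
  unfold SameComp
  simp only [image_eq_localSet]

lemma cube_zero_mono {ε ε' : ℝ} (h : ε' ≤ ε) :
    cube ε' (0 : Fin n → ℝ) ⊆ cube ε (0 : Fin n → ℝ) := by
  intro x hx
  rw [mem_cube_zero] at hx ⊢
  intro i
  linarith [hx i]

lemma localSet_mono {P : Set (Fin n → ℝ)} {ε ε' : ℝ} (h : ε' ≤ ε) (v : Fin n → ℝ) :
    localSet P ε' v = localSet P ε v ∩ cube ε' (0 : Fin n → ℝ) := by
  ext x
  simp only [localSet, Set.mem_setOf_eq, Set.mem_inter_iff]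
  constructor
  · rintro ⟨hc, hP⟩
    exact ⟨⟨cube_zero_mono h hc, hP⟩, hc⟩
  · rintro ⟨⟨_, hP⟩, hc⟩
    exact ⟨hc, hP⟩

lemma localSet_eq_mono {P : Set (Fin n → ℝ)} {ε ε' : ℝ} {v w : Fin n → ℝ}
    (hε : ε' ≤ ε) (h : localSet P ε v = localSet P ε w) :
    localSet P ε' v = localSet P ε' w := by
  rw [localSet_mono hε, localSet_mono hε, h]

lemma sameComp_refl (P : Set (Fin n → ℝ)) (v : Fin n → ℝ) : SameComp P v v :=
  ⟨1, one_pos, rfl⟩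

lemma sameComp_symm {P : Set (Fin n → ℝ)} {v w : Fin n → ℝ}
    (h : SameComp P v w) : SameComp P w v := by
  obtain ⟨ε, hε, he⟩ := h
  exact ⟨ε, hε, he.symm⟩

lemma sameComp_trans {P : Set (Fin n → ℝ)} {u v w : Fin n → ℝ}
    (h1 : SameComp P u v) (h2 : SameComp P v w) : SameComp P u w := by
  rw [sameComp_iff] at *
  obtain ⟨ε₁, hε₁, he₁⟩ := h1
  obtain ⟨ε₂, hε₂, he₂⟩ := h2
  refine ⟨min ε₁ ε₂, lt_min hε₁ hε₂, ?_⟩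
  have e1 := localSet_eq_mono (min_le_left ε₁ ε₂) he₁
  have e2 := localSet_eq_mono (min_le_right ε₁ ε₂) he₂
  rw [e1, e2]

lemma sameComp_compl {P : Set (Fin n → ℝ)} {v w : Fin n → ℝ}
    (h : SameComp P v w) : SameComp Pᶜ v w := by
  rw [sameComp_iff] at *
  obtain ⟨ε, hε, he⟩ := h
  refine ⟨ε, hε, ?_⟩
  have key : ∀ u, localSet Pᶜ ε u = cube ε (0 : Fin n → ℝ) \ localSet P ε u := by
    intro u
    ext x
    simp only [localSet, Set.mem_setOf_eq, Set.mem_diff, Set.mem_compl_iff]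
    tauto
  rw [key, key, he]

lemma sameComp_inter {P Q : Set (Fin n → ℝ)} {v w : Fin n → ℝ}
    (h1 : SameComp P v w) (h2 : SameComp Q v w) : SameComp (P ∩ Q) v w := by
  rw [sameComp_iff] at *
  obtain ⟨ε₁, hε₁, he₁⟩ := h1
  obtain ⟨ε₂, hε₂, he₂⟩ := h2
  refine ⟨min ε₁ ε₂, lt_min hε₁ hε₂, ?_⟩
  have e1 := localSet_eq_mono (min_le_left ε₁ ε₂) he₁
  have e2 := localSet_eq_mono (min_le_right ε₁ ε₂) he₂
  have key : ∀ u, localSet (P ∩ Q) (min ε₁ ε₂) u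
      = localSet P (min ε₁ ε₂) u ∩ localSet Q (min ε₁ ε₂) u := by
    intro u
    ext x
    simp only [localSet, Set.mem_setOf_eq, Set.mem_inter_iff]
    tauto
  rw [key, key, e1, e2]

lemma sameComp_union {P Q : Set (Fin n → ℝ)} {v w : Fin n → ℝ}
    (h1 : SameComp P v w) (h2 : SameComp Q v w) : SameComp (P ∪ Q) v w := by
  rw [sameComp_iff] at *
  obtain ⟨ε₁, hε₁, he₁⟩ := h1
  obtain ⟨ε₂, hε₂, he₂⟩ := h2
  refine ⟨min ε₁ ε₂, lt_min hε₁ hε₂, ?_⟩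
  have e1 := localSet_eq_mono (min_le_left ε₁ ε₂) he₁
  have e2 := localSet_eq_mono (min_le_right ε₁ ε₂) he₂
  have key : ∀ u, localSet (P ∪ Q) (min ε₁ ε₂) u
      = localSet P (min ε₁ ε₂) u ∪ localSet Q (min ε₁ ε₂) u := by
    intro u
    ext x
    simp only [localSet, Set.mem_setOf_eq, Set.mem_union]
    tauto
  rw [key, key, e1, e2]

lemma sign_stable {s t : ℝ} (h : |t| < |s|) :
    (s < 0 → s + t < 0) ∧ (0 < s → 0 < s + t) := by
  rw [abs_lt] at h
  constructor <;> intro hs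
  · have : |s| = -s := abs_of_neg hs
    linarith [h.2, this ▸ h.2]
  · have : |s| = s := abs_of_pos hs
    linarith [h.1, this ▸ h.1]

/-- Local sign stability on cubes. -/
lemma signEq_cube (p : (Fin n → ℤ) × ℤ) (v w : Fin n → ℝ)
    (hvw : SignEq (aff p v) (aff p w)) :
    ∃ ε : ℝ, 0 < ε ∧ ∀ h ∈ cube ε (0 : Fin n → ℝ), SignEq (aff p (h + v)) (aff p (h + w)) := by
  by_cases hz : aff p v = 0
  · have hwz : aff p w = 0 := hvw.2.mp hz
    refine ⟨1, one_pos, ?_⟩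
    intro h _
    rw [aff_add, aff_add, hz, hwz]
    exact SignEq.refl _
  · have hwz : aff p w ≠ 0 := fun hw => hz (hvw.2.mpr hw)
    set ε := min |aff p v| |aff p w| / (S p + 1) with hεdef
    have hSpos : 0 < S p + 1 := by linarith [S_nonneg p]
    have hε : 0 < ε := by
      apply div_pos _ hSpos
      exact lt_min (abs_pos.mpr hz) (abs_pos.mpr hwz)
    refine ⟨ε, hε, ?_⟩
    intro h hc
    rw [mem_cube_zero] at hc
    have hb : |lin p h| ≤ S p * (ε / 2) := lin_bound p h (ε / 2) hc
    have hlt : S p * (ε / 2) < (S p + 1) * ε := by nlinarith [S_nonneg p]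
    have hmin : (S p + 1) * ε = min |aff p v| |aff p w| := by
      rw [hεdef]; field_simp [hSpos.ne']
    have hbv : |lin p h| < |aff p v| := by
      have := min_le_left |aff p v| |aff p w|
      linarith [hb, hlt, hmin ▸ hlt]
    have hbw : |lin p h| < |aff p w| := by
      have h1 : S p * (ε / 2) < min |aff p v| |aff p w| := hmin ▸ hlt
      have := min_le_right |aff p v| |aff p w|
      linarith
    have sv := sign_stable hbv
    have sw := sign_stable hbw
    rw [aff_add, aff_add]
    rcases lt_trichotomy (aff p v) 0 with hv | hv | hv
    · have hw : aff p w < 0 := hvw.1.mp hv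
      have h1 : lin p h + aff p v < 0 := by linarith [sv.1 hv]
      have h2 : lin p h + aff p w < 0 := by linarith [sw.1 hw]
      exact ⟨by constructor <;> intro <;> assumption,
             by constructor <;> intro h' <;> [linarith; linarith]⟩
    · exact absurd hv hz
    · have hw : 0 < aff p w := hvw.pos.mp hv
      have h1 : 0 < lin p h + aff p v := by linarith [sv.2 hv]
      have h2 : 0 < lin p h + aff p w := by linarith [sw.2 hw]
      refine ⟨?_, ?_⟩ <;> constructor <;> intro h' <;> linarith

/-- Perturbation: nonzero signs are stable under small perturbation of the point. -/
lemma aff_pert (p : (Fin n → ℤ) × ℤ) (v : Fin n → ℝ) :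
    ∃ δ : ℝ, 0 < δ ∧ ∀ w : Fin n → ℝ, dist v w < δ →
      (aff p v < 0 → aff p w < 0) ∧ (0 < aff p v → 0 < aff p w) := by
  by_cases hz : aff p v = 0
  · exact ⟨1, one_pos, fun w _ => ⟨fun h => absurd hz (by linarith), fun h => absurd hz (by linarith)⟩⟩
  · have hSpos : 0 < S p + 1 := by linarith [S_nonneg p]
    set δ := |aff p v| / (S p + 1) with hδdef
    have hδ : 0 < δ := div_pos (abs_pos.mpr hz) hSpos
    refine ⟨δ, hδ, ?_⟩
    intro w hw
    have hcoord : ∀ i, |(w - v) i| ≤ dist v w := by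
      intro i
      have := dist_le_pi_dist w v i
      rw [Real.dist_eq] at this
      simpa [Pi.sub_apply, dist_comm v w] using this
    have hb : |lin p (w - v)| ≤ S p * dist v w :=
      lin_bound p (w - v) (dist v w) hcoord
    have hlt : S p * dist v w < (S p + 1) * δ := by
      have hd0 : 0 ≤ dist v w := dist_nonneg
      nlinarith [S_nonneg p]
    have hmax : (S p + 1) * δ = |aff p v| := by rw [hδdef]; field_simp [hSpos.ne']
    have hbv : |lin p (w - v)| < |aff p v| := by linarith [hmax ▸ hlt]
    have hs := sign_stable hbv
    have hw' : aff p w = aff p v + lin p (w - v) := by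
      have : aff p ((w - v) + v) = lin p (w - v) + aff p v := aff_add p (w - v) v
      rw [sub_add_cancel] at this
      linarith
    rw [hw']
    exact ⟨fun h => hs.1 h, fun h => hs.2 h⟩

lemma list_pert (L : List ((Fin n → ℤ) × ℤ)) (v : Fin n → ℝ) :
    ∃ δ : ℝ, 0 < δ ∧ ∀ p ∈ L, ∀ w : Fin n → ℝ, dist v w < δ →
      (aff p v < 0 → aff p w < 0) ∧ (0 < aff p v → 0 < aff p w) := by
  induction L with
  | nil => exact ⟨1, one_pos, by simp⟩
  | cons q L ih =>
    obtain ⟨δ₁, hδ₁, h₁⟩ := ih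
    obtain ⟨δ₂, hδ₂, h₂⟩ := aff_pert q v
    refine ⟨min δ₁ δ₂, lt_min hδ₁ hδ₂, ?_⟩
    intro p hp w hw
    rcases List.mem_cons.mp hp with rfl | hp
    · exact h₂ w (lt_of_lt_of_le hw (min_le_right _ _))
    · exact h₁ p hp w (lt_of_lt_of_le hw (min_le_left _ _))

/-- A single atomic constraint: equal sign implies same local structure. -/
lemma atomic_same (p : (Fin n → ℤ) × ℤ) (v w : Fin n → ℝ)
    (hs : SignEq (aff p v) (aff p w)) (Q : ℝ → Prop)
    (hQ : ∀ s t : ℝ, SignEq s t → (Q s ↔ Q t)) :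
    SameComp {x | Q (aff p x)} v w := by
  obtain ⟨ε, hε, hsc⟩ := signEq_cube p v w hs
  rw [sameComp_iff]
  refine ⟨ε, hε, ?_⟩
  ext h
  simp only [localSet, Set.mem_setOf_eq]
  constructor
  · rintro ⟨hc, hq⟩
    exact ⟨hc, (hQ _ _ (hsc h hc)).mp hq⟩
  · rintro ⟨hc, hq⟩
    exact ⟨hc, (hQ _ _ (hsc h hc)).mpr hq⟩

/-- Every polyhedron admits a finite list of affine functionals whose sign
vector determines local structure. -/
lemma exists_list {P : Set (Fin n → ℝ)} (hP : IsPolyhedron P) :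
    ∃ L : List ((Fin n → ℤ) × ℤ), ∀ v w : Fin n → ℝ,
      (∀ p ∈ L, SignEq (aff p v) (aff p w)) → SameComp P v w := by
  induction hP with
  | lt a b =>
    refine ⟨[(a, b)], fun v w hs => ?_⟩
    have hset : {x : Fin n → ℝ | (∑ i, (a i : ℝ) * x i) < b} = {x | aff (a, b) x < 0} := by
      ext x; simp [aff, sub_neg]
    rw [hset]
    refine atomic_same _ v w (hs _ (List.mem_singleton.mpr rfl)) (fun s => s < 0) ?_
    intro s t h; exact h.1
  | le a b =>
    refine ⟨[(a, b)], fun v w hs => ?_⟩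
    have hset : {x : Fin n → ℝ | (∑ i, (a i : ℝ) * x i) ≤ b} = {x | aff (a, b) x ≤ 0} := by
      ext x; simp [aff, sub_nonpos]
    rw [hset]
    refine atomic_same _ v w (hs _ (List.mem_singleton.mpr rfl)) (fun s => s ≤ 0) ?_
    intro s t h
    show s ≤ 0 ↔ t ≤ 0
    rw [le_iff_lt_or_eq, le_iff_lt_or_eq]
    exact or_congr h.1 h.2
  | eq a b =>
    refine ⟨[(a, b)], fun v w hs => ?_⟩
    have hset : {x : Fin n → ℝ | (∑ i, (a i : ℝ) * x i) = (b : ℝ)} = {x | aff (a, b) x = 0} := by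
      ext x; simp [aff, sub_eq_zero]
    rw [hset]
    exact atomic_same _ v w (hs _ (List.mem_singleton.mpr rfl)) (fun s => s = 0)
      (fun s t h => h.2)
  | ge a b =>
    refine ⟨[(a, b)], fun v w hs => ?_⟩
    have hset : {x : Fin n → ℝ | (b : ℝ) ≤ ∑ i, (a i : ℝ) * x i} = {x | 0 ≤ aff (a, b) x} := by
      ext x; simp [aff, sub_nonneg]
    rw [hset]
    refine atomic_same _ v w (hs _ (List.mem_singleton.mpr rfl)) (fun s => 0 ≤ s) ?_
    intro s t h
    show 0 ≤ s ↔ 0 ≤ t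
    rw [← not_lt, ← not_lt]
    exact not_congr h.1
  | gt a b =>
    refine ⟨[(a, b)], fun v w hs => ?_⟩
    have hset : {x : Fin n → ℝ | (b : ℝ) < ∑ i, (a i : ℝ) * x i} = {x | 0 < aff (a, b) x} := by
      ext x; simp [aff, sub_pos]
    rw [hset]
    exact atomic_same _ v w (hs _ (List.mem_singleton.mpr rfl)) (fun s => 0 < s)
      (fun s t h => h.pos)
  | compl _ ih =>
    obtain ⟨L, hL⟩ := ih
    exact ⟨L, fun v w hs => sameComp_compl (hL v w hs)⟩
  | inter _ _ ih₁ ih₂ =>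
    obtain ⟨L₁, hL₁⟩ := ih₁
    obtain ⟨L₂, hL₂⟩ := ih₂
    refine ⟨L₁ ++ L₂, fun v w hs => ?_⟩
    exact sameComp_inter (hL₁ v w fun p hp => hs p (List.mem_append_left _ hp))
      (hL₂ v w fun p hp => hs p (List.mem_append_right _ hp))
  | union _ _ ih₁ ih₂ =>
    obtain ⟨L₁, hL₁⟩ := ih₁
    obtain ⟨L₂, hL₂⟩ := ih₂
    refine ⟨L₁ ++ L₂, fun v w hs => ?_⟩
    exact sameComp_union (hL₁ v w fun p hp => hs p (List.mem_append_left _ hp))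
      (hL₂ v w fun p hp => hs p (List.mem_append_right _ hp))

open Classical in
/-- index set of functionals in `L` vanishing at `v` -/
noncomputable def Zset (L : List ((Fin n → ℤ) × ℤ)) (v : Fin n → ℝ) :
    Finset (Fin L.length) :=
  Finset.univ.filter fun i => aff (L.get i) v = 0

/-- possible zero-counts over a component -/
def Kset (L : List ((Fin n → ℤ) × ℤ)) (P : Set (Fin n → ℝ)) (u : Fin n → ℝ) : Set ℕ :=
  {k | ∃ v, SameComp P u v ∧ (Zset L v).card = k}

lemma Kset_nonempty (L : List ((Fin n → ℤ) × ℤ)) (P : Set (Fin n → ℝ)) (u : Fin n → ℝ) :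
    (Kset L P u).Nonempty :=
  ⟨(Zset L u).card, u, sameComp_refl P u, rfl⟩

/-- The key step: if `component P u₂` is dense along `component P u₁`, then
its minimal zero-count is at most that of `component P u₁`; and if they are
moreover equal, the two components coincide. -/
lemma density_step (L : List ((Fin n → ℤ) × ℤ)) (P : Set (Fin n → ℝ))
    (hL : ∀ v w : Fin n → ℝ, (∀ p ∈ L, SignEq (aff p v) (aff p w)) → SameComp P v w)
    (u₁ u₂ : Fin n → ℝ)
    (h : ∀ v₁ ∈ component P u₁, ∀ ε : ℝ, 0 < ε → ∃ v₂ ∈ component P u₂, dist v₁ v₂ < ε) :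
    sInf (Kset L P u₂) ≤ sInf (Kset L P u₁) ∧
      (sInf (Kset L P u₁) ≤ sInf (Kset L P u₂) → component P u₁ = component P u₂) := by
  classical
  obtain ⟨v₁, hv₁, hcard₁⟩ := Nat.sInf_mem (Kset_nonempty L P u₁)
  obtain ⟨δ, hδ, hpert⟩ := list_pert L v₁
  obtain ⟨v₂, hv₂, hdist⟩ := h v₁ hv₁ δ hδ
  have hv₂' : SameComp P u₂ v₂ := hv₂
  -- zeros of v₂ are contained in zeros of v₁
  have hsub : Zset L v₂ ⊆ Zset L v₁ := by
    intro i hi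
    simp only [Zset, Finset.mem_filter, Finset.mem_univ, true_and] at hi ⊢
    by_contra hne
    rcases lt_trichotomy (aff (L.get i) v₁) 0 with hlt | heq | hgt
    · have := (hpert (L.get i) (L.get_mem i) v₂ hdist).1 hlt
      linarith [hi ▸ this]
    · exact hne heq
    · have := (hpert (L.get i) (L.get_mem i) v₂ hdist).2 hgt
      linarith [hi ▸ this]
  have hle : sInf (Kset L P u₂) ≤ sInf (Kset L P u₁) := by
    calc sInf (Kset L P u₂) ≤ (Zset L v₂).card := Nat.sInf_le ⟨v₂, hv₂', rfl⟩
      _ ≤ (Zset L v₁).card := Finset.card_le_card hsub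
      _ = sInf (Kset L P u₁) := hcard₁
  refine ⟨hle, ?_⟩
  intro hge
  -- then the zero sets are equal
  have hcards : (Zset L v₁).card ≤ (Zset L v₂).card := by
    have h1 : sInf (Kset L P u₂) ≤ (Zset L v₂).card := Nat.sInf_le ⟨v₂, hv₂', rfl⟩
    omega
  have hZeq : Zset L v₂ = Zset L v₁ :=
    Finset.eq_of_subset_of_card_le hsub hcards
  -- so all signs agree
  have hsigns : ∀ p ∈ L, SignEq (aff p v₁) (aff p v₂) := by
    intro p hp
    obtain ⟨i, rfl⟩ := List.mem_iff_get.mp hp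
    rcases lt_trichotomy (aff (L.get i) v₁) 0 with hlt | heq | hgt
    · have h2 := (hpert (L.get i) (L.get_mem i) v₂ hdist).1 hlt
      exact ⟨⟨fun _ => h2, fun _ => hlt⟩, ⟨fun hc => absurd hc (by linarith),
        fun hc => absurd hc (by linarith)⟩⟩
    · have hi : i ∈ Zset L v₁ := by
        simp only [Zset, Finset.mem_filter, Finset.mem_univ, true_and]
        exact heq
      have hi2 : i ∈ Zset L v₂ := hZeq ▸ hi
      simp only [Zset, Finset.mem_filter, Finset.mem_univ, true_and] at hi2
      exact ⟨⟨fun hc => absurd heq (by linarith), fun hc => absurd hi2 (by linarith)⟩,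
        ⟨fun _ => hi2, fun _ => heq⟩⟩
    · have h2 := (hpert (L.get i) (L.get_mem i) v₂ hdist).2 hgt
      exact ⟨⟨fun hc => absurd hc (by linarith), fun hc => absurd hc (by linarith)⟩,
        ⟨fun hc => absurd hc (by linarith), fun hc => absurd hc (by linarith)⟩⟩
  have hsc : SameComp P v₁ v₂ := hL v₁ v₂ hsigns
  -- conclude equality of components
  have hu : SameComp P u₁ u₂ :=
    sameComp_trans hv₁ (sameComp_trans hsc (sameComp_symm hv₂'))
  ext w
  constructor
  · intro hw
    exact sameComp_trans (sameComp_symm hu) hw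
  · intro hw
    exact sameComp_trans hu hw

end IncidenceAux

theorem incidence_strict_partial_order {n : ℕ} (hn : 1 ≤ n)
    (P : Set (Fin n → ℝ)) (hP : IsPolyhedron P) :
    (∀ Q ∈ components P, ¬ Prec Q Q) ∧
      (∀ Q₁ ∈ components P, ∀ Q₂ ∈ components P, ∀ Q₃ ∈ components P,
        Prec Q₁ Q₂ → Prec Q₂ Q₃ → Prec Q₁ Q₃) := by
  obtain ⟨L, hL⟩ := IncidenceAux.exists_list hP
  have antisymm : ∀ u₁ u₂ : Fin n → ℝ,
      Prec (component P u₁) (component P u₂) →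
      Prec (component P u₂) (component P u₁) → False := by
    intro u₁ u₂ h12 h21
    have s1 := IncidenceAux.density_step L P hL u₁ u₂ h12.2
    have s2 := IncidenceAux.density_step L P hL u₂ u₁ h21.2
    exact h12.1 (s1.2 s2.1)
  constructor
  · intro Q _ h
    exact h.1 rfl
  · rintro Q₁ ⟨u₁, rfl⟩ Q₂ ⟨u₂, rfl⟩ Q₃ ⟨u₃, rfl⟩ h12 h23
    constructor
    · intro hEq
      exact antisymm u₁ u₂ h12 (hEq ▸ h23)
    · intro v₁ hv₁ ε hε
      obtain ⟨v₂, hv₂, hd₁⟩ := h12.2 v₁ hv₁ (ε / 2) (by linarith)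
      obtain ⟨v₃, hv₃, hd₂⟩ := h23.2 v₂ hv₂ (ε / 2) (by linarith)
      exact ⟨v₃, hv₃, by calc dist v₁ v₃ ≤ dist v₁ v₂ + dist v₂ v₃ := dist_triangle _ _ _
        _ < ε := by linarith⟩
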